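/- Consider a set of points P = {(i, y_i) : i ≥ 0} with y_i ∈ ℝ_{>0}, and suppose the sequence of first differences Δ_i = y_i - y_{i-1} (i ≥ 1) is a union of C arithmetic progressions with common difference δ, in the sense that Δ_{i+C} = Δ_i + δ for all i ≥ 1. If x ≥ C is the index of a break point of the lower convex hull (Newton polygon) of P, then x - C is also the index of a break point. -/
import Mathlib


/-- If the first differences `Δ_i = y_i - y_{i-1}` of points `(i, y_i)` (with `y_i > 0`)
form a union of `C` arithmetic progressions with common difference `δ`, in the sense that
`Δ_{i+C} = Δ_i + δ` for all `i ≥ 1`, then whenever `x ≥ C` is the index of a break point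
(vertex) of the lower convex hull (Newton polygon) of the points, so is `x - C`.  Here
"`x` is a break point index" means: for all `i < x < j`, the point `(x, y_x)` lies
strictly below the segment from `(i, y_i)` to `(j, y_j)`, expressed by the cross-multiplied
slope inequality. -/
theorem stmt_7 (y : ℕ → ℝ) (hy : ∀ i, 0 < y i) (C : ℕ) (hC : 0 < C) (δ : ℝ)
    (hΔ : ∀ i : ℕ, 1 ≤ i → y (i + C) - y (i + C - 1) = (y i - y (i - 1)) + δ)
    (x : ℕ) (hx : C ≤ x)
    (hbreak : ∀ i j : ℕ, i < x → x < j →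
      (y x - y i) * ((j : ℝ) - (x : ℝ)) < (y j - y x) * ((x : ℝ) - (i : ℝ))) :
    ∀ i j : ℕ, i < x - C → x - C < j →
      (y (x - C) - y i) * ((j : ℝ) - ((x - C : ℕ) : ℝ))
        < (y j - y (x - C)) * (((x - C : ℕ) : ℝ) - (i : ℝ)) := by
  -- shift lemma: y (b+C) - y (a+C) = (y b - y a) + (b-a) δ
  have shift : ∀ a b : ℕ, a ≤ b →
      y (b + C) - y (a + C) = (y b - y a) + ((b : ℝ) - a) * δ := by
    intro a b hab
    induction b, hab using Nat.le_induction with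
    | base => simp
    | succ b hab ih =>
      have h := hΔ (b + 1) (by omega)
      have e1 : b + 1 + C - 1 = b + C := by omega
      have e2 : b + 1 - 1 = b := by omega
      rw [e1, e2] at h
      have : y (b + 1 + C) - y (a + C) =
          (y (b + 1 + C) - y (b + C)) + (y (b + C) - y (a + C)) := by ring
      rw [this, h, ih]
      push_cast
      ring
  intro i j hi hj
  have hxe : x - C + C = x := Nat.sub_add_cancel hx
  have h1 : y x - y (i + C) = (y (x - C) - y i) + (((x - C : ℕ) : ℝ) - i) * δ := by
    have := shift i (x - C) (by omega)
    rwa [hxe] at this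
  have h2 : y (j + C) - y x = (y j - y (x - C)) + ((j : ℝ) - ((x - C : ℕ) : ℝ)) * δ := by
    have := shift (x - C) j (by omega)
    rwa [hxe] at this
  have hb := hbreak (i + C) (j + C) (by omega) (by omega)
  have cx : ((x - C : ℕ) : ℝ) + (C : ℝ) = (x : ℝ) := by
    exact_mod_cast congrArg (Nat.cast (R := ℝ)) hxe
  push_cast at hb
  rw [← cx] at hb
  nlinarith [hb, h1, h2]
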